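/- arXiv:0801.2445 — 2 statements merged into one kernel-verified Lean document; each statement's English description precedes it below -/
import Mathlib

section
/- Let N ≥ 5 be an integer and b ≥ −4 a real number, and define u(x) = −4 log|x| − (4+b)(1−|x|²)/2 for x ∈ B \ {0}. Then u is a singular subsolution: Δ²u(x) = 8(N−2)(N−4)|x|^{−4} ≤ 8(N−2)(N−4) e^{(4+b)/2} e^{u(x)} for all x ∈ B \ {0}, and on the boundary sphere u(x) = 0 and ∂u/∂n(x) = ∇u(x)·x = b for all |x| = 1. -/
open MeasureTheory Metric

/-- The Laplacian of `u : ℝ^N → ℝ`: the sum of its second partial derivatives. -/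
noncomputable def lap {N : ℕ} (u : EuclideanSpace ℝ (Fin N) → ℝ) :
    EuclideanSpace ℝ (Fin N) → ℝ :=
  fun x => ∑ i, fderiv ℝ (fun y => fderiv ℝ u y (EuclideanSpace.single i 1)) x
    (EuclideanSpace.single i 1)

/-- The bilaplacian `Δ²u = Δ(Δu)`. -/
noncomputable def bilap {N : ℕ} (u : EuclideanSpace ℝ (Fin N) → ℝ) :
    EuclideanSpace ℝ (Fin N) → ℝ :=
  lap (lap u)

noncomputable def Sq {N : ℕ} (y : EuclideanSpace ℝ (Fin N)) : ℝ := ∑ j, y j ^ 2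

noncomputable def DS {N : ℕ} (x : EuclideanSpace ℝ (Fin N)) :
    EuclideanSpace ℝ (Fin N) →L[ℝ] ℝ :=
  ∑ j, (2 * x j) • (EuclideanSpace.proj j : EuclideanSpace ℝ (Fin N) →L[ℝ] ℝ)

lemma Sq_eq_norm {N : ℕ} (y : EuclideanSpace ℝ (Fin N)) : Sq y = ‖y‖ ^ 2 := by
  rw [EuclideanSpace.norm_eq, Real.sq_sqrt (by positivity)]
  simp [Sq, Real.norm_eq_abs, sq_abs]

lemma Sq_pos {N : ℕ} {y : EuclideanSpace ℝ (Fin N)} (hy : y ≠ 0) : 0 < Sq y := by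
  rw [Sq_eq_norm]
  exact pow_pos (norm_pos_iff.mpr hy) 2

lemma hasFDerivAt_Sq {N : ℕ} (x : EuclideanSpace ℝ (Fin N)) :
    HasFDerivAt (fun y : EuclideanSpace ℝ (Fin N) => Sq y) (DS x) x := by
  apply HasFDerivAt.fun_sum
  intro j _
  have h := (EuclideanSpace.proj j : EuclideanSpace ℝ (Fin N) →L[ℝ] ℝ).hasFDerivAt (x := x)
  have h2 := h.fun_mul h
  simp only [pow_two]
  refine (h2.congr_fderiv ?_).congr_of_eventuallyEq (Filter.Eventually.of_forall fun y => ?_)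
  · ext v
    simp
    ring
  · simp [pow_two]

lemma DS_single {N : ℕ} (x : EuclideanSpace ℝ (Fin N)) (i : Fin N) :
    DS x (EuclideanSpace.single i 1) = 2 * x i := by
  simp [DS, EuclideanSpace.single_apply]

lemma DS_self {N : ℕ} (x : EuclideanSpace ℝ (Fin N)) : DS x x = 2 * Sq x := by
  simp [DS, Sq, Finset.mul_sum, pow_two, mul_assoc]

lemma comp_Sq {N : ℕ} (x : EuclideanSpace ℝ (Fin N)) {φ : ℝ → ℝ} {φ' : ℝ}
    (hφ : HasDerivAt φ φ' (Sq x)) :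
    HasFDerivAt (fun y : EuclideanSpace ℝ (Fin N) => φ (Sq y)) (φ' • DS x) x :=
  hφ.comp_hasFDerivAt x (hasFDerivAt_Sq x)

lemma key {N : ℕ} (x : EuclideanSpace ℝ (Fin N)) {φ : ℝ → ℝ} {φ' : ℝ}
    (hφ : HasDerivAt φ φ' (Sq x)) (i : Fin N) :
    HasFDerivAt (fun y : EuclideanSpace ℝ (Fin N) => φ (Sq y) * y i)
      (φ (Sq x) • (EuclideanSpace.proj i : EuclideanSpace ℝ (Fin N) →L[ℝ] ℝ)
        + x i • (φ' • DS x)) x :=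
  (comp_Sq x hφ).mul ((EuclideanSpace.proj i :
    EuclideanSpace ℝ (Fin N) →L[ℝ] ℝ).hasFDerivAt (x := x))

lemma hderiv_div {c t : ℝ} (ht : t ≠ 0) :
    HasDerivAt (fun s : ℝ => c / s) (-c / t ^ 2) t := by
  have h := (hasDerivAt_inv ht).const_mul c
  have he : (fun s : ℝ => c * s⁻¹) = fun s : ℝ => c / s := by
    funext s; ring
  rw [he] at h
  refine h.congr_deriv ?_
  ring

lemma hderiv_div_sq {c t : ℝ} (ht : t ≠ 0) :
    HasDerivAt (fun s : ℝ => c / s ^ 2) (-2 * c / t ^ 3) t := by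
  have h := ((hasDerivAt_inv ht).mul (hasDerivAt_inv ht)).const_mul c
  have he : (fun s : ℝ => c * (s⁻¹ * s⁻¹)) = fun s : ℝ => c / s ^ 2 := by
    funext s; ring
  simp only [Pi.mul_apply] at h
  rw [he] at h
  refine h.congr_deriv ?_
  field_simp
  ring

lemma hphi1 (b t : ℝ) (ht : t ≠ 0) :
    HasDerivAt (fun t : ℝ => -2 * Real.log t - (4 + b) * (1 - t) / 2)
      (-2 / t + (4 + b) / 2) t := by
  have h1 := (Real.hasDerivAt_log ht).const_mul (-2 : ℝ)
  have h2 : HasDerivAt (fun t : ℝ => (4 + b) * (1 - t) / 2) (-(4 + b) / 2) t := by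
    have := (((hasDerivAt_id' (x := t)).const_sub 1).const_mul ((4 : ℝ) + b)).div_const 2
    refine this.congr_deriv ?_
    ring
  refine (h1.sub h2).congr_deriv ?_
  field_simp
  ring

/-- The explicit singular subsolution `u(x) = -4 log|x| - (4+b)(1-|x|²)/2` used in the
proofs of Lemma 5.2 and Proposition 1.5 b): it satisfies
`Δ²u = 8(N-2)(N-4)|x|⁻⁴ ≤ 8(N-2)(N-4) e^{(4+b)/2} eᵘ` in `B \ {0}`, with `u = 0` and
`∂u/∂n = b` on `∂B`. -/
theorem explicit_subsolution (N : ℕ) (hN : 5 ≤ N) (b : ℝ) (hb : -4 ≤ b) :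
    let u : EuclideanSpace ℝ (Fin N) → ℝ :=
      fun x => -4 * Real.log ‖x‖ - (4 + b) * (1 - ‖x‖ ^ 2) / 2
    (∀ x : EuclideanSpace ℝ (Fin N), ‖x‖ < 1 → x ≠ 0 →
      bilap u x = 8 * ((N : ℝ) - 2) * ((N : ℝ) - 4) / ‖x‖ ^ 4 ∧
      8 * ((N : ℝ) - 2) * ((N : ℝ) - 4) / ‖x‖ ^ 4 ≤
        8 * ((N : ℝ) - 2) * ((N : ℝ) - 4) * Real.exp ((4 + b) / 2) * Real.exp (u x)) ∧
    (∀ x : EuclideanSpace ℝ (Fin N), ‖x‖ = 1 → u x = 0 ∧ fderiv ℝ u x x = b) := by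
  intro u
  have hu : u = fun y : EuclideanSpace ℝ (Fin N) =>
      -2 * Real.log (Sq y) - (4 + b) * (1 - Sq y) / 2 := by
    funext y
    show -4 * Real.log ‖y‖ - (4 + b) * (1 - ‖y‖ ^ 2) / 2 = _
    have h0 : (0 : ℝ) ≤ Sq y := by rw [Sq_eq_norm]; positivity
    have h3 : ‖y‖ = Real.sqrt (Sq y) := by
      rw [Sq_eq_norm, Real.sqrt_sq (norm_nonneg y)]
    rw [h3, Real.log_sqrt h0, Real.sq_sqrt h0]
    ring
  have hu' : ∀ y : EuclideanSpace ℝ (Fin N), y ≠ 0 →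
      HasFDerivAt u ((-2 / Sq y + (4 + b) / 2) • DS y) y := by
    intro y hy
    rw [hu]
    exact comp_Sq y (hphi1 b _ (Sq_pos hy).ne')
  have lap_u : ∀ z : EuclideanSpace ℝ (Fin N), z ≠ 0 →
      lap u z = (8 - 4 * (N : ℝ)) / Sq z + (N : ℝ) * (4 + b) := by
    intro z hz
    have hSz := Sq_pos hz
    have hterm : ∀ i : Fin N,
        fderiv ℝ (fun y => fderiv ℝ u y (EuclideanSpace.single i 1)) z
          (EuclideanSpace.single i 1)
        = 8 * z i ^ 2 / Sq z ^ 2 + ((-4 : ℝ) / Sq z + (4 + b)) := by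
      intro i
      have hev : (fun y => fderiv ℝ u y (EuclideanSpace.single i 1)) =ᶠ[nhds z]
          (fun y => ((-4 : ℝ) / Sq y + (4 + b)) * y i) := by
        filter_upwards [compl_singleton_mem_nhds hz] with y hy
        rw [(hu' y (by simpa using hy)).fderiv]
        simp only [ContinuousLinearMap.smul_apply, smul_eq_mul, DS_single]
        ring
      rw [hev.fderiv_eq]
      have hφ : HasDerivAt (fun t : ℝ => (-4 : ℝ) / t + (4 + b)) (4 / Sq z ^ 2) (Sq z) := by
        have := (hderiv_div (c := (-4 : ℝ)) hSz.ne').add_const ((4 : ℝ) + b)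
        refine this.congr_deriv ?_
        ring
      rw [(key z hφ i).fderiv]
      simp only [ContinuousLinearMap.add_apply, ContinuousLinearMap.smul_apply,
        smul_eq_mul, DS_single, PiLp.proj_apply, EuclideanSpace.single_apply, if_pos rfl, if_true, eq_self_iff_true]
      ring
    have hsum : lap u z = ∑ i : Fin N,
        (8 * z i ^ 2 / Sq z ^ 2 + ((-4 : ℝ) / Sq z + (4 + b))) :=
      Finset.sum_congr rfl fun i _ => hterm i
    rw [hsum, Finset.sum_add_distrib, Finset.sum_const, Finset.card_univ,
      Fintype.card_fin, nsmul_eq_mul]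
    have h8 : ∑ i : Fin N, 8 * z i ^ 2 / Sq z ^ 2 = 8 * Sq z / Sq z ^ 2 := by
      rw [← Finset.sum_div, ← Finset.mul_sum, Sq]
    rw [h8]
    field_simp
    ring
  constructor
  · intro x hx1 hx0
    have hSx := Sq_pos hx0
    have hx4 : ‖x‖ ^ 4 = Sq x ^ 2 := by rw [Sq_eq_norm]; ring
    constructor
    · -- bilaplacian identity
      have hlapf : ∀ y : EuclideanSpace ℝ (Fin N), y ≠ 0 →
          fderiv ℝ (lap u) y
          = fderiv ℝ (fun z => (8 - 4 * (N : ℝ)) / Sq z + (N : ℝ) * (4 + b)) y := by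
        intro y hy
        apply Filter.EventuallyEq.fderiv_eq
        filter_upwards [compl_singleton_mem_nhds hy] with w hw
        exact lap_u w (by simpa using hw)
      have hbterm : ∀ i : Fin N,
          fderiv ℝ (fun y => fderiv ℝ (lap u) y (EuclideanSpace.single i 1)) x
            (EuclideanSpace.single i 1)
          = (-2 * (8 - 4 * (N : ℝ))) / Sq x ^ 2
            + 8 * (8 - 4 * (N : ℝ)) * x i ^ 2 / Sq x ^ 3 := by
        intro i
        have hev : (fun y => fderiv ℝ (lap u) y (EuclideanSpace.single i 1)) =ᶠ[nhds x]
            (fun y => ((-2 * (8 - 4 * (N : ℝ))) / Sq y ^ 2) * y i) := by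
          filter_upwards [compl_singleton_mem_nhds hx0] with y hy
          have hy0 : y ≠ 0 := by simpa using hy
          rw [hlapf y hy0]
          have hφ : HasDerivAt (fun t : ℝ => (8 - 4 * (N : ℝ)) / t + (N : ℝ) * (4 + b))
              (-(8 - 4 * (N : ℝ)) / Sq y ^ 2) (Sq y) :=
            (hderiv_div (Sq_pos hy0).ne').add_const _
          rw [(comp_Sq y hφ).fderiv]
          simp only [ContinuousLinearMap.smul_apply, smul_eq_mul, DS_single]
          ring
        rw [hev.fderiv_eq]
        have hφ2 : HasDerivAt (fun t : ℝ => (-2 * (8 - 4 * (N : ℝ))) / t ^ 2)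
            (-2 * (-2 * (8 - 4 * (N : ℝ))) / Sq x ^ 3) (Sq x) := hderiv_div_sq hSx.ne'
        rw [(key x hφ2 i).fderiv]
        simp only [ContinuousLinearMap.add_apply, ContinuousLinearMap.smul_apply,
          smul_eq_mul, DS_single, PiLp.proj_apply, EuclideanSpace.single_apply, if_pos rfl, if_true, eq_self_iff_true]
        ring
      have hsum : bilap u x = ∑ i : Fin N,
          ((-2 * (8 - 4 * (N : ℝ))) / Sq x ^ 2
            + 8 * (8 - 4 * (N : ℝ)) * x i ^ 2 / Sq x ^ 3) := by
        show (∑ i : Fin N, fderiv ℝ (fun y => fderiv ℝ (lap u) y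
            (EuclideanSpace.single i 1)) x (EuclideanSpace.single i 1)) = _
        exact Finset.sum_congr rfl fun i _ => hbterm i
      rw [hsum, Finset.sum_add_distrib, Finset.sum_const, Finset.card_univ,
        Fintype.card_fin, nsmul_eq_mul]
      have h8 : ∑ i : Fin N, 8 * (8 - 4 * (N : ℝ)) * x i ^ 2 / Sq x ^ 3
          = 8 * (8 - 4 * (N : ℝ)) * Sq x / Sq x ^ 3 := by
        rw [← Finset.sum_div, ← Finset.mul_sum, Sq]
      rw [h8, hx4]
      field_simp
      ring
    · -- inequality
      have hr : (0 : ℝ) < ‖x‖ := norm_pos_iff.mpr hx0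
      have hA : (0 : ℝ) ≤ 8 * ((N : ℝ) - 2) * ((N : ℝ) - 4) := by
        have h5 : (5 : ℝ) ≤ (N : ℝ) := by exact_mod_cast hN
        nlinarith
      have hux : u x = -4 * Real.log ‖x‖ - (4 + b) * (1 - ‖x‖ ^ 2) / 2 := rfl
      have h1 : Real.exp (-4 * Real.log ‖x‖) = (‖x‖ ^ 4)⁻¹ := by
        rw [show (-4 : ℝ) * Real.log ‖x‖ = Real.log ((‖x‖ ^ 4)⁻¹) by
          rw [Real.log_inv, Real.log_pow]; push_cast; ring,
          Real.exp_log (by positivity)]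
      have h2 : Real.exp ((4 + b) / 2) * Real.exp (u x)
          = (‖x‖ ^ 4)⁻¹ * Real.exp ((4 + b) * ‖x‖ ^ 2 / 2) := by
        rw [hux, ← Real.exp_add,
          show (4 + b) / 2 + (-4 * Real.log ‖x‖ - (4 + b) * (1 - ‖x‖ ^ 2) / 2)
            = -4 * Real.log ‖x‖ + (4 + b) * ‖x‖ ^ 2 / 2 by ring,
          Real.exp_add, h1]
      have h3 : (1 : ℝ) ≤ Real.exp ((4 + b) * ‖x‖ ^ 2 / 2) := by
        apply Real.one_le_exp
        have hb4 : (0 : ℝ) ≤ 4 + b := by linarith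
        positivity
      have h4 : (0 : ℝ) ≤ 8 * ((N : ℝ) - 2) * ((N : ℝ) - 4) * (‖x‖ ^ 4)⁻¹ := by
        positivity
      calc 8 * ((N : ℝ) - 2) * ((N : ℝ) - 4) / ‖x‖ ^ 4
          = 8 * ((N : ℝ) - 2) * ((N : ℝ) - 4) * (‖x‖ ^ 4)⁻¹ * 1 := by
            rw [div_eq_mul_inv, mul_one]
        _ ≤ 8 * ((N : ℝ) - 2) * ((N : ℝ) - 4) * (‖x‖ ^ 4)⁻¹
            * Real.exp ((4 + b) * ‖x‖ ^ 2 / 2) := by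
            exact mul_le_mul_of_nonneg_left h3 h4
        _ = 8 * ((N : ℝ) - 2) * ((N : ℝ) - 4) * Real.exp ((4 + b) / 2) * Real.exp (u x) := by
            rw [mul_assoc (8 * ((N : ℝ) - 2) * ((N : ℝ) - 4)) (Real.exp ((4 + b) / 2)), h2]
            ring
  · intro x hx1
    have hx0 : x ≠ 0 := by
      intro h
      rw [h] at hx1
      simp at hx1
    have hSx : Sq x = 1 := by rw [Sq_eq_norm, hx1]; norm_num
    constructor
    · show -4 * Real.log ‖x‖ - (4 + b) * (1 - ‖x‖ ^ 2) / 2 = 0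
      rw [hx1]
      simp
    · rw [(hu' x hx0).fderiv]
      simp only [ContinuousLinearMap.smul_apply, smul_eq_mul, DS_self, hSx]
      ring
end

section
/- For all real numbers x and y, (e^x + e^y)/2 ≥ e^{(x+y)/2} + (1/8)(x − y)² e^{(x+y)/2}. -/
lemma aux_cosh (t : ℝ) (ht : 0 ≤ t) : 2 + t ^ 2 ≤ Real.exp t + Real.exp (-t) := by
  have h4 := Real.sum_le_exp_of_nonneg ht 4
  have hp : 1 + t + t ^ 2 / 2 + t ^ 3 / 6 ≤ Real.exp t := by
    have hs : ∑ i ∈ Finset.range 4, t ^ i / (Nat.factorial i : ℝ)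
        = 1 + t + t ^ 2 / 2 + t ^ 3 / 6 := by
      simp [Finset.sum_range_succ, Nat.factorial]
    linarith [hs ▸ h4]
  have hab : Real.exp t * Real.exp (-t) = 1 := by
    rw [← Real.exp_add]; simp
  have hb := Real.exp_pos (-t)
  set a := Real.exp t with hadef
  have hf : 0 ≤ a ^ 2 - (2 + t ^ 2) * a + 1 := by
    nlinarith [sq_nonneg (a - (1 + t + t ^ 2 / 2 + t ^ 3 / 6)),
      mul_nonneg (by positivity : (0:ℝ) ≤ 2 * t + t ^ 3 / 3)
        (by linarith : 0 ≤ a - (1 + t + t ^ 2 / 2 + t ^ 3 / 6)),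
      pow_le_pow_left₀ ht (le_refl t) 4, sq_nonneg (t ^ 2), sq_nonneg (t ^ 3)]
  nlinarith [mul_nonneg hb.le hf]

/-- The convexity inequality (19): for all real `x`, `y`,
`(eˣ + eʸ)/2 ≥ e^{(x+y)/2} + (1/8)(x-y)² e^{(x+y)/2}`. -/
theorem exp_midpoint_inequality (x y : ℝ) :
    Real.exp ((x + y) / 2) + 1 / 8 * (x - y) ^ 2 * Real.exp ((x + y) / 2) ≤
      (Real.exp x + Real.exp y) / 2 := by
  wlog hxy : y ≤ x with H
  · have := H y x (le_of_not_ge hxy)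
    rw [add_comm y x] at this
    nlinarith [this]
  set t := (x - y) / 2 with htdef
  have ht : 0 ≤ t := by rw [htdef]; linarith
  have hx : x = (x + y) / 2 + t := by rw [htdef]; ring
  have hy : y = (x + y) / 2 + -t := by rw [htdef]; ring
  have hcosh := aux_cosh t ht
  have hm := Real.exp_pos ((x + y) / 2)
  calc Real.exp ((x + y) / 2) + 1 / 8 * (x - y) ^ 2 * Real.exp ((x + y) / 2)
      = Real.exp ((x + y) / 2) * (2 + t ^ 2) / 2 := by rw [htdef]; ring
    _ ≤ Real.exp ((x + y) / 2) * (Real.exp t + Real.exp (-t)) / 2 := by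
        have := mul_le_mul_of_nonneg_left hcosh hm.le
        linarith
    _ = (Real.exp x + Real.exp y) / 2 := by
        have e1 : Real.exp x = Real.exp ((x + y) / 2) * Real.exp t := by
          rw [← Real.exp_add, htdef]; ring_nf
        have e2 : Real.exp y = Real.exp ((x + y) / 2) * Real.exp (-t) := by
          rw [← Real.exp_add, htdef]; ring_nf
        rw [e1, e2]; ring
end
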